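/- Let n ≥ 1 be an integer, M > 0, and δ ∈ (0,1). Let y, y' ∈ ℝⁿ differ in at most one coordinate, with |y_k| ≤ M and |y'_k| ≤ M for all k, and with |(1/n)·Σ_{k=1}^n y_k| ≤ 1−δ and |(1/n)·Σ_{k=1}^n y'_k| ≤ 1−δ. Then |Fis((1/n)·Σ_{k=1}^n y_k) − Fis((1/n)·Σ_{k=1}^n y'_k)| ≤ 2M/(n·δ·(2−δ)). -/
import Mathlib

/-- Fisher's Z transformation. -/
noncomputable def Fis (x : ℝ) : ℝ := Real.log ((1 + x) / (1 - x)) / 2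

lemma fis_lip (δ : ℝ) (hδ0 : 0 < δ) (hδ1 : δ < 1) (a b : ℝ)
    (ha : |a| ≤ 1 - δ) (hb : |b| ≤ 1 - δ) :
    |Fis a - Fis b| ≤ (1 / (δ * (2 - δ))) * |a - b| := by
  set s : Set ℝ := Set.Icc (-(1 - δ)) (1 - δ) with hs
  set g : ℝ → ℝ := fun x => (Real.log (1 + x) - Real.log (1 - x)) / 2 with hg
  have hmem : ∀ x : ℝ, |x| ≤ 1 - δ → x ∈ s := fun x hx => abs_le.mp hx
  have hpos : ∀ x ∈ s, 0 < 1 + x ∧ 0 < 1 - x := by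
    rintro x ⟨h1, h2⟩; constructor <;> linarith
  have hderiv : ∀ x ∈ s,
      HasDerivWithinAt g (1 / ((1 + x) * (1 - x))) s x := by
    intro x hx
    obtain ⟨h1, h2⟩ := hpos x hx
    have d1 : HasDerivAt (fun x : ℝ => Real.log (1 + x)) (1 / (1 + x)) x := by
      have := ((hasDerivAt_id x).const_add 1).log (ne_of_gt h1)
      simpa using this
    have d2 : HasDerivAt (fun x : ℝ => Real.log (1 - x)) (-1 / (1 - x)) x := by
      have h : HasDerivAt (fun x : ℝ => 1 - x) (-1) x := by
        simpa using ((hasDerivAt_id x).const_sub 1)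
      have := h.log (ne_of_gt h2)
      simpa using this
    have := ((d1.sub d2).div_const 2)
    have heq : (1 / (1 + x) - -1 / (1 - x)) / 2 = 1 / ((1 + x) * (1 - x)) := by
      field_simp; ring
    rw [heq] at this
    exact this.hasDerivWithinAt
  have hbound : ∀ x ∈ s, ‖1 / ((1 + x) * (1 - x))‖ ≤ 1 / (δ * (2 - δ)) := by
    intro x hx
    obtain ⟨h1, h2⟩ := hpos x hx
    obtain ⟨hl, hr⟩ := hx
    have hp : 0 < (1 + x) * (1 - x) := mul_pos h1 h2
    have hdp : 0 < δ * (2 - δ) := by nlinarith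
    rw [Real.norm_eq_abs, abs_of_pos (by positivity)]
    apply one_div_le_one_div_of_le hdp
    nlinarith
  have key := (convex_Icc _ _).norm_image_sub_le_of_norm_hasDerivWithin_le
    hderiv hbound (hmem b hb) (hmem a ha)
  have heq : ∀ x ∈ s, Fis x = g x := by
    intro x hx
    obtain ⟨h1, h2⟩ := hpos x hx
    simp only [Fis, hg, Real.log_div (ne_of_gt h1) (ne_of_gt h2)]
  rw [heq a (hmem a ha), heq b (hmem b hb)]
  simpa [Real.norm_eq_abs] using key

/-- Bounded-differences estimate for the Fisher's Z transformed sample mean: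
changing a single bounded data point changes `Fis` of the mean by at most
`2M/(n·δ·(2−δ))`, provided both means lie in `[-(1-δ), 1-δ]`. -/
theorem stmt8 (n : ℕ) (hn : 1 ≤ n) (M δ : ℝ) (hM : 0 < M) (hδ0 : 0 < δ) (hδ1 : δ < 1)
    (y y' : Fin n → ℝ) (k₀ : Fin n) (hdiff : ∀ k, k ≠ k₀ → y k = y' k)
    (hy : ∀ k, |y k| ≤ M) (hy' : ∀ k, |y' k| ≤ M)
    (hmean : |(1 / (n : ℝ)) * ∑ k, y k| ≤ 1 - δ)
    (hmean' : |(1 / (n : ℝ)) * ∑ k, y' k| ≤ 1 - δ) :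
    |Fis ((1 / (n : ℝ)) * ∑ k, y k) - Fis ((1 / (n : ℝ)) * ∑ k, y' k)| ≤
      2 * M / (n * δ * (2 - δ)) := by
  have hn0 : (0 : ℝ) < n := by exact_mod_cast hn
  have hsum : (∑ k, y k) - (∑ k, y' k) = y k₀ - y' k₀ := by
    rw [← Finset.sum_sub_distrib]
    rw [Finset.sum_eq_single k₀]
    · intro b _ hb; rw [hdiff b hb]; ring
    · intro h; exact absurd (Finset.mem_univ k₀) h
  have hdist : |(1 / (n : ℝ)) * ∑ k, y k - (1 / (n : ℝ)) * ∑ k, y' k| ≤ 2 * M / n := by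
    rw [← mul_sub, hsum, abs_mul, abs_of_pos (by positivity : (0:ℝ) < 1 / (n:ℝ))]
    have h2M : |y k₀ - y' k₀| ≤ 2 * M := by
      calc |y k₀ - y' k₀| ≤ |y k₀| + |y' k₀| := abs_sub _ _
        _ ≤ 2 * M := by linarith [hy k₀, hy' k₀]
    have heq2 : 2 * M / (n : ℝ) = 1 / (n : ℝ) * (2 * M) := by ring
    rw [heq2]
    exact mul_le_mul_of_nonneg_left h2M (by positivity)
  have hlip := fis_lip δ hδ0 hδ1 _ _ hmean hmean'
  have hdp : 0 < δ * (2 - δ) := by nlinarith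
  calc |Fis ((1 / (n : ℝ)) * ∑ k, y k) - Fis ((1 / (n : ℝ)) * ∑ k, y' k)|
      ≤ (1 / (δ * (2 - δ))) * |(1 / (n : ℝ)) * ∑ k, y k - (1 / (n : ℝ)) * ∑ k, y' k| := hlip
    _ ≤ (1 / (δ * (2 - δ))) * (2 * M / n) := by
        apply mul_le_mul_of_nonneg_left hdist (by positivity)
    _ = 2 * M / (n * δ * (2 - δ)) := by rw [div_mul_div_comm, one_mul]; congr 1; ring
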